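/- Let k ≥ 3 and ℓ ≥ 0 be integers. If G is a finite simple graph that is k-vertex-critical and (P3+ℓP1)-free, then the independence number of G satisfies α(G) < (k−1)²·(ℓ+3). -/

import Mathlib

open SimpleGraph

/-- The graph `P₃ + ℓP₁`: disjoint union of a path on 3 vertices and `ℓ` isolated vertices. -/
def P3PlusP1 (ℓ : ℕ) : SimpleGraph (Fin 3 ⊕ Fin ℓ) :=
  pathGraph 3 ⊕g (⊥ : SimpleGraph (Fin ℓ))

/-- `G` is `H`-free: no induced subgraph of `G` is isomorphic to `H`. -/
def HFree {W V : Type*} (H : SimpleGraph W) (G : SimpleGraph V) : Prop :=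
  IsEmpty (H ↪g G)

/-- `G` is `k`-vertex-critical: `χ(G) = k` and `χ(G - v) < k` for every vertex `v`. -/
def VertexCritical {V : Type*} (G : SimpleGraph V) (k : ℕ) : Prop :=
  G.chromaticNumber = k ∧ ∀ v : V, (G.induce {v}ᶜ).chromaticNumber < k

/-- The independence number of a finite graph. -/
noncomputable def indepNumber (V : Type*) [Fintype V] (G : SimpleGraph V) : ℕ :=
  sSup {n : ℕ | ∃ S : Set V, S.Pairwise (fun a b => ¬ G.Adj a b) ∧ S.ncard = n}

section aux

set_option linter.unusedTactic false
set_option linter.unreachableTactic false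

variable {V : Type*} {k ℓ : ℕ} {G : SimpleGraph V}

lemma config_false (hfree : HFree (P3PlusP1 ℓ) G)
    {a b c : V} (S : Finset V) (hab : G.Adj a b) (hbc : G.Adj b c) (hac : ¬ G.Adj a c)
    (hne : a ≠ c) (hcard : ℓ ≤ S.card)
    (hSa : ∀ s ∈ S, ¬ G.Adj s a ∧ ¬ G.Adj s b ∧ ¬ G.Adj s c ∧ s ≠ a ∧ s ≠ b ∧ s ≠ c)
    (hSp : ∀ s ∈ S, ∀ t ∈ S, s ≠ t → ¬ G.Adj s t) : False := by
  obtain ⟨T, hTS, hT⟩ := Finset.exists_subset_card_eq hcard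
  obtain ⟨f, hfinj, hfmem⟩ : ∃ f : Fin ℓ → V, Function.Injective f ∧ ∀ i, f i ∈ T := by
    refine ⟨fun i => (T.equivFin.symm (Fin.cast hT.symm i) : V), ?_, fun i => (T.equivFin.symm _).2⟩
    intro i j h
    have h2 : T.equivFin.symm (Fin.cast hT.symm i) = T.equivFin.symm (Fin.cast hT.symm j) :=
      Subtype.ext h
    have := T.equivFin.symm.injective h2
    simpa [Fin.ext_iff] using this
  have hfS : ∀ i, f i ∈ S := fun i => hTS (hfmem i)
  have hfa : ∀ i, ¬ G.Adj (f i) a := fun i => (hSa _ (hfS i)).1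
  have hfb : ∀ i, ¬ G.Adj (f i) b := fun i => (hSa _ (hfS i)).2.1
  have hfc : ∀ i, ¬ G.Adj (f i) c := fun i => (hSa _ (hfS i)).2.2.1
  have hfna : ∀ i, f i ≠ a := fun i => (hSa _ (hfS i)).2.2.2.1
  have hfnb : ∀ i, f i ≠ b := fun i => (hSa _ (hfS i)).2.2.2.2.1
  have hfnc : ∀ i, f i ≠ c := fun i => (hSa _ (hfS i)).2.2.2.2.2
  have hfp : ∀ i j, i ≠ j → ¬ G.Adj (f i) (f j) :=
    fun i j hij => hSp _ (hfS i) _ (hfS j) (fun h => hij (hfinj h))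
  have habne : a ≠ b := hab.ne
  have hbcne : b ≠ c := hbc.ne
  let F : Fin 3 ⊕ Fin ℓ → V := Sum.elim (![a, b, c]) f
  have hF0 : F (Sum.inl 0) = a := rfl
  have hF1 : F (Sum.inl 1) = b := rfl
  have hF2 : F (Sum.inl 2) = c := rfl
  have hFr : ∀ i, F (Sum.inr i) = f i := fun i => rfl
  have hFadj : ∀ x y, G.Adj (F x) (F y) ↔ (P3PlusP1 ℓ).Adj x y := by
    have key : ∀ i j : Fin 3, (P3PlusP1 ℓ).Adj (Sum.inl i) (Sum.inl j) ↔
        (i.val + 1 = j.val ∨ j.val + 1 = i.val) := by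
      intro i j
      simp [P3PlusP1, pathGraph_adj]
    rintro (i | i) (j | j)
    · rw [key]
      fin_cases i <;> fin_cases j <;>
        simp only [hF0, hF1, hF2, Fin.val_zero, Fin.val_one, Fin.val_two] <;>
        constructor <;> intro h <;>
        first
          | omega
          | exact hab | exact hbc | exact hab.symm | exact hbc.symm
          | exact absurd h (G.irrefl) | exact absurd h hac
          | exact absurd h (fun h' => hac (G.adj_symm h'))
          | exact Or.inl (by decide) | exact Or.inr (by decide)
          | (rcases h with h | h <;> simp_all)
    · have : ¬ (P3PlusP1 ℓ).Adj (Sum.inl i) (Sum.inr j) := by simp [P3PlusP1]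
      rw [iff_false_intro this, iff_false]
      rw [hFr]
      fin_cases i <;> simp only [hF0, hF1, hF2] <;> intro h
      · exact hfa j (G.adj_symm h)
      · exact hfb j (G.adj_symm h)
      · exact hfc j (G.adj_symm h)
    · have : ¬ (P3PlusP1 ℓ).Adj (Sum.inr i) (Sum.inl j) := by simp [P3PlusP1]
      rw [iff_false_intro this, iff_false]
      rw [hFr]
      fin_cases j <;> simp only [hF0, hF1, hF2] <;> intro h
      · exact hfa i h
      · exact hfb i h
      · exact hfc i h
    · have : ¬ (P3PlusP1 ℓ).Adj (Sum.inr i) (Sum.inr j) := by simp [P3PlusP1]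
      rw [iff_false_intro this, iff_false, hFr, hFr]
      by_cases hij : i = j
      · subst hij; exact G.irrefl
      · exact hfp i j hij
  have hFinj : Function.Injective F := by
    have habc : ∀ i : Fin 3, F (Sum.inl i) = a ∨ F (Sum.inl i) = b ∨ F (Sum.inl i) = c := by
      intro i; fin_cases i
      · exact Or.inl hF0
      · exact Or.inr (Or.inl hF1)
      · exact Or.inr (Or.inr hF2)
    rintro (i | i) (j | j) h
    · fin_cases i <;> fin_cases j <;> simp only [hF0, hF1, hF2] at h <;>
        first
          | rfl
          | exact absurd h habne | exact absurd h hne | exact absurd h hbcne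
          | exact absurd h.symm habne | exact absurd h.symm hne | exact absurd h.symm hbcne
    · exfalso
      rw [hFr] at h
      rcases habc i with h' | h' | h' <;> rw [h'] at h
      · exact hfna j h.symm
      · exact hfnb j h.symm
      · exact hfnc j h.symm
    · exfalso
      rw [hFr] at h
      rcases habc j with h' | h' | h' <;> rw [h'] at h
      · exact hfna i h
      · exact hfnb i h
      · exact hfnc i h
    · rw [hFr, hFr] at h
      rw [hfinj h]
  exact hfree.elim ⟨⟨F, hFinj⟩, fun {x y} => hFadj x y⟩

lemma exists_coloring (hk : 3 ≤ k) (hcrit : VertexCritical G k) (v : V) :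
    ∃ c : V → Fin (k-1), (∀ x y, G.Adj x y → x ≠ v → y ≠ v → c x ≠ c y) ∧
      (∀ i : Fin (k-1), ∃ x, G.Adj v x ∧ c x = i) := by
  have hpos : 0 < k - 1 := by omega
  have hcast : ((k:ℕ∞)) = ((k-1 : ℕ) : ℕ∞) + 1 := by
    norm_cast; omega
  have hle : (G.induce {v}ᶜ).chromaticNumber ≤ ((k-1 : ℕ) : ℕ∞) := by
    have hlt := hcrit.2 v
    rw [hcast] at hlt
    exact (ENat.lt_add_one_iff (by simp)).mp hlt
  have hcol : (G.induce {v}ᶜ).Colorable (k-1) := chromaticNumber_le_iff_colorable.mp hle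
  obtain ⟨C⟩ := hcol
  classical
  have hne : Nonempty (Fin (k-1)) := ⟨⟨0, hpos⟩⟩
  set c : V → Fin (k-1) := fun x =>
    if h : x = v then Classical.arbitrary _ else C ⟨x, by simp [h]⟩ with hc
  have hproper : ∀ x y, G.Adj x y → x ≠ v → y ≠ v → c x ≠ c y := by
    intro x y hxy hx hy
    have : (G.induce {v}ᶜ).Adj ⟨x, by simp [hx]⟩ ⟨y, by simp [hy]⟩ := by
      simp [hxy]
    have := C.valid this
    simpa [hc, hx, hy] using this
  refine ⟨c, hproper, ?_⟩
  by_contra hcon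
  push_neg at hcon
  obtain ⟨i, hi⟩ := hcon
  have : G.Colorable (k-1) := by
    refine ⟨Coloring.mk (fun x => if x = v then i else c x) ?_⟩
    intro x y hxy
    by_cases hx : x = v <;> by_cases hy : y = v
    · exact absurd (hx ▸ hy ▸ hxy) (G.irrefl)
    · subst hx
      simp only [if_pos rfl, if_neg hy]
      exact fun h => hi y hxy h.symm
    · subst hy
      simp only [if_neg hx, if_pos rfl]
      exact fun h => hi x (G.adj_symm hxy) h
    · simpa [hx, hy] using hproper x y hxy hx hy
  have hle2 : G.chromaticNumber ≤ ((k-1:ℕ) : ℕ∞) := this.chromaticNumber_le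
  rw [hcrit.1] at hle2
  have : ((k:ℕ∞)) ≤ ((k-1:ℕ):ℕ∞) := hle2
  rw [Nat.cast_le] at this
  omega

end aux

theorem stmt0 (k ℓ : ℕ) (hk : 3 ≤ k) (V : Type*) [Fintype V] (G : SimpleGraph V)
    (hcrit : VertexCritical G k) (hfree : HFree (P3PlusP1 ℓ) G) :
    indepNumber V G < (k - 1) ^ 2 * (ℓ + 3) := by
  classical
  by_contra hcon
  push_neg at hcon
  set B := (k - 1) ^ 2 * (ℓ + 3) with hB
  -- extract a maximum independent set
  set s : Set ℕ := {n : ℕ | ∃ S : Set V, S.Pairwise (fun a b => ¬ G.Adj a b) ∧ S.ncard = n}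
    with hs
  have hbdd : BddAbove s := by
    refine ⟨Fintype.card V, ?_⟩
    rintro n ⟨S, _, rfl⟩
    calc S.ncard ≤ (Set.univ : Set V).ncard :=
          Set.ncard_le_ncard (Set.subset_univ S) (Set.finite_univ)
      _ = Fintype.card V := by rw [Set.ncard_univ, Nat.card_eq_fintype_card]
  have hnes : s.Nonempty := ⟨0, ∅, by simp, by simp⟩
  have hmem : sSup s ∈ s := Nat.sSup_mem hnes hbdd
  obtain ⟨S, hSp, hScard⟩ := hmem
  have hconB : B ≤ sSup s := hcon
  have hSfin : S.Finite := Set.toFinite S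
  set I : Finset V := hSfin.toFinset with hIdef
  have hmemI : ∀ x, x ∈ I ↔ x ∈ S := fun x => hSfin.mem_toFinset
  have hIcard : I.card = sSup s := by
    rw [← hScard, Set.ncard_eq_toFinset_card S hSfin]
  have hIB : B ≤ I.card := hIcard ▸ hconB
  have hInd : ∀ a ∈ I, ∀ b ∈ I, a ≠ b → ¬ G.Adj a b := by
    intro a ha b hb hab
    exact hSp ((hmemI a).mp ha) ((hmemI b).mp hb) hab
  have hImax : ∀ x, x ∉ I → ∃ y ∈ I, G.Adj x y := by
    intro x hx
    by_contra h
    push_neg at h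
    have hxS : x ∉ S := fun h' => hx ((hmemI x).mpr h')
    have hsymm : Symmetric (fun a b => ¬ G.Adj a b) := by
      intro a b hab h
      exact hab (G.adj_symm h)
    have hp : (insert x S).Pairwise (fun a b => ¬ G.Adj a b) := by
      haveI : Std.Symm (fun a b : V => ¬ G.Adj a b) := ⟨fun a b h => hsymm h⟩; rw [Set.pairwise_insert_of_symmetric]
      refine ⟨hSp, fun b hb _ => h b ((hmemI b).mpr hb)⟩
    have hcard2 : (insert x S).ncard = sSup s + 1 := by
      rw [Set.ncard_insert_of_notMem hxS hSfin, hScard]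
    have hgt : sSup s + 1 ∈ s := ⟨insert x S, hp, hcard2⟩
    have := le_csSup hbdd hgt
    omega
  -- arithmetic facts
  have hm2 : 2 ≤ k - 1 := by omega
  obtain ⟨m, hm⟩ : ∃ m, k - 1 = m + 2 := ⟨k - 3, by omega⟩
  have hBm : B = (m+2)^2 * (ℓ+3) := by rw [hB, hm]
  have hstep2 : (m+2) * (ℓ+3) ≤ (m+2)^2 * (ℓ+3) := by
    rw [pow_two, mul_assoc]
    exact Nat.le_mul_of_pos_left _ (by omega)
  have hBl : ℓ + 2 ≤ B := by
    rw [hBm]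
    calc ℓ + 2 ≤ (m+2) * (ℓ+3) := by nlinarith [Nat.zero_le (m * (ℓ+3))]
      _ ≤ (m+2)^2 * (ℓ+3) := hstep2
  have hA1 : (k - 1) * ℓ + 2 ≤ I.card := by
    have h1 : (m+2) * ℓ + 2 ≤ (m+2) * (ℓ+3) := by
      have h6 : 2 ≤ (m+2) * 3 := by omega
      calc (m+2) * ℓ + 2 ≤ (m+2) * ℓ + (m+2) * 3 := Nat.add_le_add_left h6 _
        _ = (m+2) * (ℓ+3) := (Nat.mul_add _ _ _).symm
    rw [hm]
    calc (m+2) * ℓ + 2 ≤ (m+2) * (ℓ+3) := h1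
      _ ≤ (m+2)^2 * (ℓ+3) := hstep2
      _ = B := hBm.symm
      _ ≤ I.card := hIB
  have hA4 : (k - 1) * (ℓ + 1) + 2 ≤ I.card := by
    have h1 : (m+2) * (ℓ+1) + 2 ≤ (m+2) * (ℓ+3) := by
      have h6 : 2 ≤ (m+2) * 2 := by omega
      calc (m+2) * (ℓ+1) + 2 ≤ (m+2) * (ℓ+1) + (m+2) * 2 := Nat.add_le_add_left h6 _
        _ = (m+2) * (ℓ+1+2) := (Nat.mul_add _ _ _).symm
        _ = (m+2) * (ℓ+3) := by ring_nf
    rw [hm]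
    calc (m+2) * (ℓ+1) + 2 ≤ (m+2) * (ℓ+3) := h1
      _ ≤ (m+2)^2 * (ℓ+3) := hstep2
      _ = B := hBm.symm
      _ ≤ I.card := hIB
  have hBI2 : ℓ + 2 ≤ I.card := le_trans hBl hIB
  -- pendant existence
  have cfg := fun {a b c : V} (S' : Finset V) => config_false hfree (a := a) (b := b) (c := c) S'
  have hpend_ex : ∀ u ∈ I, ∃ p, G.Adj u p ∧ ∀ b ∈ I, G.Adj p b → b = u := by
    intro u hu
    obtain ⟨c, hcp, hcm⟩ := exists_coloring hk hcrit u
    have hmaps : ∀ a ∈ I.erase u, c a ∈ (Finset.univ : Finset (Fin (k-1))) := by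
      intro a _; exact Finset.mem_univ _
    have hlt : (Finset.univ : Finset (Fin (k-1))).card * ℓ < (I.erase u).card := by
      rw [Finset.card_univ, Fintype.card_fin, Finset.card_erase_of_mem hu]
      omega
    obtain ⟨i, _, hi⟩ := Finset.exists_lt_card_fiber_of_mul_lt_card_of_maps_to hmaps hlt
    set Cf := (I.erase u).filter (fun a => c a = i) with hCf
    obtain ⟨w, hwadj, hwc⟩ := hcm i
    refine ⟨w, hwadj, ?_⟩
    intro b hb hwb
    by_contra hbu
    have hwu : w ≠ u := fun h => G.irrefl (h ▸ hwadj)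
    have hwnI : w ∉ I := fun h => hInd u hu w h (Ne.symm hwu) hwadj
    have hCfmem : ∀ x ∈ Cf, x ∈ I ∧ x ≠ u ∧ c x = i := by
      intro x hx
      simp only [hCf, Finset.mem_filter, Finset.mem_erase] at hx
      exact ⟨hx.1.2, hx.1.1, hx.2⟩
    refine cfg (Cf.erase b) hwadj hwb (hInd u hu b hb (Ne.symm hbu)) (fun h => hbu h.symm)
      ?_ ?_ ?_
    · have := Finset.pred_card_le_card_erase (s := Cf) (a := b)
      omega
    · intro x hx
      have hxb : x ≠ b := Finset.ne_of_mem_erase hx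
      obtain ⟨hxI, hxu, hxc⟩ := hCfmem x (Finset.mem_of_mem_erase hx)
      refine ⟨hInd x hxI u hu hxu, ?_, hInd x hxI b hb hxb, hxu, ?_, hxb⟩
      · intro hadj
        exact hcp w x (G.adj_symm hadj) hwu hxu (hwc.trans hxc.symm)
      · intro h; exact hwnI (h ▸ hxI)
    · intro x hx y hy hxy
      obtain ⟨hxI, hxu, hxc⟩ := hCfmem x (Finset.mem_of_mem_erase hx)
      obtain ⟨hyI, hyu, hyc⟩ := hCfmem y (Finset.mem_of_mem_erase hy)
      intro hadj
      exact hcp x y hadj hxu hyu (hxc.trans hyc.symm)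
  choose! w hw1 hw2 using hpend_ex
  have hpendnI : ∀ u ∈ I, ∀ p, G.Adj u p → p ∉ I := by
    intro u hu p hadj hp
    exact hInd u hu p hp hadj.ne hadj
  have hcross : ∀ u ∈ I, ∀ u' ∈ I, u ≠ u' → ∀ p q,
      (G.Adj u p ∧ ∀ b ∈ I, G.Adj p b → b = u) →
      (G.Adj u' q ∧ ∀ b ∈ I, G.Adj q b → b = u') → ¬ G.Adj p q := by
    intro u hu u' hu' huu p q hp hq hpq
    have hqnI : q ∉ I := hpendnI u' hu' q hq.1
    have hpnI : p ∉ I := hpendnI u hu p hp.1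
    have hne : u ≠ q := fun h => hqnI (h ▸ hu)
    have hac : ¬ G.Adj u q := fun h => huu (hq.2 u hu (G.adj_symm h))
    refine cfg ((I.erase u).erase u') hp.1 hpq hac hne ?_ ?_ ?_
    · have h1 := Finset.pred_card_le_card_erase (s := I.erase u) (a := u')
      have h2 : (I.erase u).card = I.card - 1 := Finset.card_erase_of_mem hu
      omega
    · intro x hx
      have hxu' : x ≠ u' := Finset.ne_of_mem_erase hx
      have hxu : x ≠ u := Finset.ne_of_mem_erase (Finset.mem_of_mem_erase hx)
      have hxI : x ∈ I := Finset.mem_of_mem_erase (Finset.mem_of_mem_erase hx)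
      refine ⟨hInd x hxI u hu hxu, ?_, ?_, hxu, ?_, ?_⟩
      · exact fun h => hxu (hp.2 x hxI (G.adj_symm h))
      · exact fun h => hxu' (hq.2 x hxI (G.adj_symm h))
      · exact fun h => hpnI (h ▸ hxI)
      · exact fun h => hqnI (h ▸ hxI)
    · intro x hx y hy hxy
      exact hInd x (Finset.mem_of_mem_erase (Finset.mem_of_mem_erase hx)) y
        (Finset.mem_of_mem_erase (Finset.mem_of_mem_erase hy)) hxy
  have hsame : ∀ u ∈ I, ∀ p q,
      (G.Adj u p ∧ ∀ b ∈ I, G.Adj p b → b = u) →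
      (G.Adj u q ∧ ∀ b ∈ I, G.Adj q b → b = u) → p ≠ q → G.Adj p q := by
    intro u hu p q hp hq hpq
    by_contra hnadj
    have hpnI := hpendnI u hu p hp.1
    have hqnI := hpendnI u hu q hq.1
    refine cfg (I.erase u) (G.adj_symm hp.1) hq.1 hnadj hpq ?_ ?_ ?_
    · rw [Finset.card_erase_of_mem hu]; omega
    · intro x hx
      have hxu : x ≠ u := Finset.ne_of_mem_erase hx
      have hxI : x ∈ I := Finset.mem_of_mem_erase hx
      exact ⟨fun h => hxu (hp.2 x hxI (G.adj_symm h)), hInd x hxI u hu hxu,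
        fun h => hxu (hq.2 x hxI (G.adj_symm h)), fun h => hpnI (h ▸ hxI), hxu,
        fun h => hqnI (h ▸ hxI)⟩
    · intro x hx y hy hxy
      exact hInd x (Finset.mem_of_mem_erase hx) y (Finset.mem_of_mem_erase hy) hxy
  set badset : V → Finset V := fun z => I.filter (fun u =>
    ¬ G.Adj z u ∨ ∃ p, (G.Adj u p ∧ ∀ d ∈ I, G.Adj p d → d = u) ∧ ¬ G.Adj z p) with hbadset
  have hmembad : ∀ z u, u ∈ badset z ↔ (u ∈ I ∧
      (¬ G.Adj z u ∨ ∃ p, (G.Adj u p ∧ ∀ d ∈ I, G.Adj p d → d = u) ∧ ¬ G.Adj z p)) := by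
    intro z u
    rw [hbadset]
    exact Finset.mem_filter
  have hbad : ∀ z, ∀ a ∈ I, ∀ b ∈ I, a ≠ b → G.Adj z a → G.Adj z b →
      (badset z).card ≤ ℓ + 1 := by
    intro z a ha b hb hab hza hzb
    have hznI : z ∉ I := fun h => hInd z h a ha hza.ne hza
    by_cases hex : ∃ u ∈ I, G.Adj z u ∧ ∃ p,
        (G.Adj u p ∧ ∀ d ∈ I, G.Adj p d → d = u) ∧ ¬ G.Adj z p
    · obtain ⟨u, hu, hzu, p, hpend, hzp⟩ := hex
      have hpnI := hpendnI u hu p hpend.1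
      have hpz : p ≠ z := by
        intro h
        subst h
        have h1 := hpend.2 a ha hza
        have h2 := hpend.2 b hb hzb
        exact hab (h1.trans h2.symm)
      have hsel : ∀ c ∈ (badset z).erase u, ∃ x, ¬ G.Adj z x ∧ ¬ G.Adj x p ∧ ¬ G.Adj x u ∧
          x ≠ p ∧ x ≠ u ∧ x ≠ z ∧
          (x = c ∨ (x ∉ I ∧ G.Adj c x ∧ ∀ d ∈ I, G.Adj x d → d = c)) := by
        intro c hc
        have hcu : c ≠ u := Finset.ne_of_mem_erase hc
        obtain ⟨hcI, hcprop⟩ := (hmembad z c).mp (Finset.mem_of_mem_erase hc)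
        rcases hcprop with hnadj | ⟨p', hp'pend, hzp'⟩
        · refine ⟨c, hnadj, fun h => hcu (hpend.2 c hcI (G.adj_symm h)),
            hInd c hcI u hu hcu, fun h => hpnI (h ▸ hcI), hcu,
            fun h => hznI (h ▸ hcI), Or.inl rfl⟩
        · refine ⟨p', hzp', ?_, ?_, ?_, ?_, ?_, Or.inr ⟨hpendnI c hcI p' hp'pend.1,
            hp'pend.1, hp'pend.2⟩⟩
          · exact hcross c hcI u hu hcu p' p hp'pend hpend
          · exact fun h => hcu ((hp'pend.2 u hu h).symm)
          · intro h
            exact hcu (hpend.2 c hcI (G.adj_symm (h ▸ hp'pend.1)))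
          · exact fun h => hInd c hcI u hu hcu (h ▸ hp'pend.1)
          · intro h
            have h1 := hp'pend.2 a ha (by rw [h]; exact hza)
            have h2 := hp'pend.2 b hb (by rw [h]; exact hzb)
            exact hab (h1.trans h2.symm)
      choose! g hg using hsel
      have hinjOn : Set.InjOn g (((badset z).erase u : Finset V) : Set V) := by
        intro c hc c' hc' heq
        have hcI : c ∈ I := ((hmembad z c).mp (Finset.mem_of_mem_erase hc)).1
        have hc'I : c' ∈ I := ((hmembad z c').mp (Finset.mem_of_mem_erase hc')).1
        have h7 := (hg c hc).2.2.2.2.2.2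
        have h7' := (hg c' hc').2.2.2.2.2.2
        rcases h7 with h7 | ⟨hnI, _, huniq⟩
        · rcases h7' with h7' | ⟨hnI', _, _⟩
          · rw [← h7, ← h7']; exact heq
          · exfalso
            rw [heq] at h7
            exact hnI' (h7.symm ▸ hcI)
        · rcases h7' with h7' | ⟨_, hadj', _⟩
          · exfalso
            rw [← heq] at h7'
            exact hnI (h7'.symm ▸ hc'I)
          · have hadj2 : G.Adj (g c) c' := G.adj_symm (by rw [heq]; exact hadj')
            exact (huniq c' hc'I hadj2).symm
      by_contra hgt
      push_neg at hgt
      have hcarde : ℓ ≤ ((badset z).erase u).card := by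
        have := Finset.pred_card_le_card_erase (s := badset z) (a := u)
        omega
      refine cfg (((badset z).erase u).image g) (G.adj_symm hpend.1) (G.adj_symm hzu)
        (fun h => hzp (G.adj_symm h)) hpz ?_ ?_ ?_
      · rw [Finset.card_image_of_injOn hinjOn]
        exact hcarde
      · intro x hx
        obtain ⟨c, hc, rfl⟩ := Finset.mem_image.mp hx
        have h := hg c hc
        exact ⟨h.2.1, h.2.2.1, fun hh => h.1 (G.adj_symm hh), h.2.2.2.1, h.2.2.2.2.1,
          h.2.2.2.2.2.1⟩
      · intro x hx y hy hxy
        obtain ⟨c, hc, rfl⟩ := Finset.mem_image.mp hx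
        obtain ⟨c', hc', rfl⟩ := Finset.mem_image.mp hy
        have hcc' : c ≠ c' := fun h => hxy (h ▸ rfl)
        have hcI : c ∈ I := ((hmembad z c).mp (Finset.mem_of_mem_erase hc)).1
        have hc'I : c' ∈ I := ((hmembad z c').mp (Finset.mem_of_mem_erase hc')).1
        have h7 := (hg c hc).2.2.2.2.2.2
        have h7' := (hg c' hc').2.2.2.2.2.2
        rcases h7 with h7 | ⟨_, hadjc, huniq⟩
        · rcases h7' with h7' | ⟨_, _, huniq'⟩
          · rw [h7, h7']
            exact hInd c hcI c' hc'I hcc'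
          · rw [h7]
            exact fun h => hcc' (huniq' c hcI (G.adj_symm h))
        · rcases h7' with h7' | ⟨_, hadjc', huniq'⟩
          · rw [h7']
            exact fun h => hcc' ((huniq c' hc'I h).symm)
          · exact hcross c hcI c' hc'I hcc' (g c) (g c') ⟨hadjc, huniq⟩ ⟨hadjc', huniq'⟩
    · have hsub : badset z ⊆ I.filter (fun u => ¬ G.Adj z u) := by
        intro x hx
        obtain ⟨hxI, hxprop⟩ := (hmembad z x).mp hx
        rw [Finset.mem_filter]
        refine ⟨hxI, ?_⟩
        rcases hxprop with h | ⟨p, hp, hzp⟩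
        · exact h
        · intro hzx
          exact hex ⟨x, hxI, hzx, p, hp, hzp⟩
      have hcardI : (I.filter (fun x => ¬ G.Adj z x)).card ≤ ℓ + 1 := by
        by_contra hgt
        push_neg at hgt
        refine cfg (I.filter (fun x => ¬ G.Adj z x)) (G.adj_symm hza) hzb
          (hInd a ha b hb hab) hab ?_ ?_ ?_
        · omega
        · intro x hx
          obtain ⟨hxI, hxz⟩ := Finset.mem_filter.mp hx
          have hxa : x ≠ a := fun h => hxz (h ▸ hza)
          have hxb : x ≠ b := fun h => hxz (h ▸ hzb)
          exact ⟨hInd x hxI a ha hxa, fun h => hxz (G.adj_symm h), hInd x hxI b hb hxb,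
            hxa, fun h => hznI (h ▸ hxI), hxb⟩
        · intro x hx y hy hxy
          exact hInd x (Finset.mem_filter.mp hx).1 y (Finset.mem_filter.mp hy).1 hxy
      calc (badset z).card ≤ (I.filter (fun x => ¬ G.Adj z x)).card :=
            Finset.card_le_card hsub
        _ ≤ ℓ + 1 := hcardI
  have hclique : ∀ (K : Finset V), (∀ x ∈ K, ∀ y ∈ K, x ≠ y → G.Adj x y) →
      ∀ b ∈ I, b ∉ K → K.card ≤ k - 1 := by
    intro K hK b hb hbK
    obtain ⟨c, hcp, _⟩ := exists_coloring hk hcrit b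
    have hinj : Set.InjOn c K := by
      intro x hx y hy hcxy
      by_contra hxyne
      exact hcp x y (hK x hx y hy hxyne) (fun h => hbK (h ▸ hx)) (fun h => hbK (h ▸ hy)) hcxy
    calc K.card = (K.image c).card := (Finset.card_image_of_injOn hinj).symm
      _ ≤ (Finset.univ : Finset (Fin (k-1))).card :=
          Finset.card_le_card (Finset.subset_univ _)
      _ = k - 1 := by rw [Finset.card_univ, Fintype.card_fin]
  set Pf : V → Finset V := fun u => Finset.univ.filter
    (fun p => G.Adj u p ∧ ∀ b ∈ I, G.Adj p b → b = u) with hPfdef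
  have hmemPf : ∀ u p, p ∈ Pf u ↔ (G.Adj u p ∧ ∀ b ∈ I, G.Adj p b → b = u) := by
    intro u p
    rw [hPfdef]
    simp only [Finset.mem_filter, Finset.mem_univ, true_and]
  set Qf : V → Finset V := fun u => insert u (Pf u) with hQfdef
  have huQf : ∀ u, u ∈ Qf u := fun u => Finset.mem_insert_self _ _
  have hunPf : ∀ u, u ∉ Pf u := fun u h => G.irrefl ((hmemPf u u).mp h).1
  have hQclique : ∀ u ∈ I, ∀ x ∈ Qf u, ∀ y ∈ Qf u, x ≠ y → G.Adj x y := by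
    intro u hu x hx y hy hxy
    rw [hQfdef] at hx hy
    rcases Finset.mem_insert.mp hx with rfl | hx' <;>
      rcases Finset.mem_insert.mp hy with rfl | hy'
    · exact absurd rfl hxy
    · exact ((hmemPf x y).mp hy').1
    · exact G.adj_symm ((hmemPf y x).mp hx').1
    · exact hsame u hu x y ((hmemPf u x).mp hx') ((hmemPf u y).mp hy') hxy
  have hQlow : ∀ u ∈ I, 2 ≤ (Qf u).card := by
    intro u hu
    have hwP : w u ∈ Pf u := (hmemPf u (w u)).mpr ⟨hw1 u hu, hw2 u hu⟩
    have : (Qf u).card = (Pf u).card + 1 := by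
      rw [hQfdef]
      exact Finset.card_insert_of_notMem (hunPf u)
    have : 1 ≤ (Pf u).card := Finset.card_pos.mpr ⟨w u, hwP⟩
    omega
  have hQhigh : ∀ u ∈ I, (Qf u).card ≤ k - 1 := by
    intro u hu
    obtain ⟨b, hb⟩ : (I.erase u).Nonempty := by
      rw [← Finset.card_pos, Finset.card_erase_of_mem hu]
      omega
    have hbI : b ∈ I := Finset.mem_of_mem_erase hb
    have hbu : b ≠ u := Finset.ne_of_mem_erase hb
    refine hclique (Qf u) (hQclique u hu) b hbI ?_
    intro hbQ
    rw [hQfdef] at hbQ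
    rcases Finset.mem_insert.mp hbQ with h | h
    · exact hbu h
    · exact hInd u hu b hbI (Ne.symm hbu) ((hmemPf u b).mp h).1
  -- minimizer
  have hInon : I.Nonempty := by
    rw [← Finset.card_pos]
    omega
  obtain ⟨u₁, hu₁, hmin⟩ := I.exists_min_image (fun u => (Qf u).card) hInon
  set p₁ := w u₁ with hp₁def
  have hp₁pend : G.Adj u₁ p₁ ∧ ∀ b ∈ I, G.Adj p₁ b → b = u₁ := ⟨hw1 u₁ hu₁, hw2 u₁ hu₁⟩
  have hp₁Qf : p₁ ∈ Qf u₁ := Finset.mem_insert_of_mem ((hmemPf u₁ p₁).mpr hp₁pend)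
  have hp₁nI : p₁ ∉ I := hpendnI u₁ hu₁ p₁ hp₁pend.1
  obtain ⟨c, hcp, hcm⟩ := exists_coloring hk hcrit p₁
  set K₁ : Finset V := (Qf u₁).erase p₁ with hK₁def
  have hinj1 : Set.InjOn c K₁ := by
    intro x hx y hy hcxy
    by_contra hne
    exact hcp x y (hQclique u₁ hu₁ x (Finset.mem_of_mem_erase hx) y
      (Finset.mem_of_mem_erase hy) hne) (Finset.ne_of_mem_erase hx)
      (Finset.ne_of_mem_erase hy) hcxy
  set q₁ := (Qf u₁).card with hq₁def
  have hK₁card : (K₁.image c).card = q₁ - 1 := by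
    rw [Finset.card_image_of_injOn hinj1, hK₁def, Finset.card_erase_of_mem hp₁Qf]
  set Kz : Finset (Fin (k-1)) := Finset.univ \ (K₁.image c) with hKzdef
  have hzwit : ∀ κ ∈ Kz, ∃ z, G.Adj p₁ z ∧ c z = κ ∧
      ∃ a ∈ I, ∃ b ∈ I, a ≠ b ∧ G.Adj z a ∧ G.Adj z b := by
    intro κ hκ
    obtain ⟨x, hx1, hx2⟩ := hcm κ
    refine ⟨x, hx1, hx2, ?_⟩
    have hxp₁ : x ≠ p₁ := fun h => G.irrefl (h ▸ hx1)
    have hxQ : x ∉ Qf u₁ := by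
      intro hxQ
      have hxK : x ∈ K₁ := Finset.mem_erase.mpr ⟨hxp₁, hxQ⟩
      have : c x ∈ K₁.image c := Finset.mem_image_of_mem c hxK
      rw [hx2] at this
      rw [hKzdef, Finset.mem_sdiff] at hκ
      exact hκ.2 this
    have hxnI : x ∉ I := by
      intro hxI
      have hxu : x = u₁ := hp₁pend.2 x hxI hx1
      exact hxQ (hxu ▸ huQf u₁)
    obtain ⟨a, ha, hxa⟩ := hImax x hxnI
    by_cases h2 : ∃ b ∈ I, b ≠ a ∧ G.Adj x b
    · obtain ⟨b, hb, hba, hxb⟩ := h2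
      exact ⟨a, ha, b, hb, Ne.symm hba, hxa, hxb⟩
    · exfalso
      push_neg at h2
      have hxpend : G.Adj a x ∧ ∀ d ∈ I, G.Adj x d → d = a := by
        refine ⟨G.adj_symm hxa, fun d hd hxd => ?_⟩
        by_contra hda
        exact (h2 d hd hda) hxd
      by_cases hau : a = u₁
      · subst hau
        exact hxQ (Finset.mem_insert_of_mem ((hmemPf a x).mpr hxpend))
      · exact hcross a ha u₁ hu₁ hau x p₁ hxpend hp₁pend (G.adj_symm hx1)
  choose zf hzf1 hzf2 hzf3 using hzwit
  set bigbad : Finset V := Kz.attach.biUnion (fun κ => badset (zf κ.1 κ.2)) with hbigdef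
  have hbigcard : bigbad.card ≤ (k-1) * (ℓ+1) := by
    calc bigbad.card ≤ ∑ κ ∈ Kz.attach, (badset (zf κ.1 κ.2)).card :=
          Finset.card_biUnion_le
      _ ≤ Kz.attach.card * (ℓ + 1) := by
          refine Finset.sum_le_card_nsmul _ _ _ ?_
          intro κ _
          obtain ⟨a, ha, b, hb, hab, hza, hzb⟩ := hzf3 κ.1 κ.2
          exact hbad (zf κ.1 κ.2) a ha b hb hab hza hzb
      _ ≤ (k-1) * (ℓ+1) := by
          have h1 : Kz.attach.card = Kz.card := Finset.card_attach
          have h2 : Kz.card ≤ k - 1 := by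
            calc Kz.card ≤ (Finset.univ : Finset (Fin (k-1))).card :=
                  Finset.card_le_card (by rw [hKzdef]; exact Finset.sdiff_subset)
              _ = k - 1 := by rw [Finset.card_univ, Fintype.card_fin]
          exact Nat.mul_le_mul_right _ (h1 ▸ h2)
  obtain ⟨u₂, hu₂mem⟩ : (I \ insert u₁ bigbad).Nonempty := by
    rw [← Finset.card_pos]
    have hsd : (I \ insert u₁ bigbad).card ≥ I.card - (insert u₁ bigbad).card :=
      Finset.le_card_sdiff _ _
    have hins : (insert u₁ bigbad).card ≤ bigbad.card + 1 := Finset.card_insert_le _ _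
    omega
  obtain ⟨hu₂I, hu₂nb⟩ := Finset.mem_sdiff.mp hu₂mem
  have hu₂u₁ : u₂ ≠ u₁ := fun h => hu₂nb (h ▸ Finset.mem_insert_self _ _)
  have hu₂bad : ∀ (κ : Fin (k-1)) (hκ : κ ∈ Kz), u₂ ∉ badset (zf κ hκ) := by
    intro κ hκ h
    exact hu₂nb (Finset.mem_insert_of_mem
      (Finset.mem_biUnion.mpr ⟨⟨κ, hκ⟩, Finset.mem_attach _ _, h⟩))
  have hQ₂ne : ∀ x ∈ Qf u₂, x ≠ p₁ := by
    intro x hx h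
    rcases Finset.mem_insert.mp hx with h' | h'
    · exact hp₁nI ((h' ▸ h) ▸ hu₂I)
    · have hadj : G.Adj u₂ p₁ := h ▸ ((hmemPf u₂ x).mp h').1
      exact hu₂u₁ (hp₁pend.2 u₂ hu₂I (G.adj_symm hadj))
  have hQ₂col : ∀ x ∈ Qf u₂, c x ∈ K₁.image c := by
    intro x hx
    by_contra hxcol
    have hκ : c x ∈ Kz := by
      rw [hKzdef, Finset.mem_sdiff]
      exact ⟨Finset.mem_univ _, hxcol⟩
    have hprop : ¬ (¬ G.Adj (zf (c x) hκ) u₂ ∨ ∃ p,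
        (G.Adj u₂ p ∧ ∀ d ∈ I, G.Adj p d → d = u₂) ∧ ¬ G.Adj (zf (c x) hκ) p) := by
      intro hp
      exact hu₂bad (c x) hκ ((hmembad _ u₂).mpr ⟨hu₂I, hp⟩)
    push_neg at hprop
    obtain ⟨hzu₂, hzpend⟩ := hprop
    have hzx : G.Adj (zf (c x) hκ) x := by
      rcases Finset.mem_insert.mp hx with rfl | hxP
      · exact hzu₂
      · exact hzpend x ((hmemPf u₂ x).mp hxP)
    have hzp₁ : zf (c x) hκ ≠ p₁ := fun h => G.irrefl (h ▸ hzf1 (c x) hκ)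
    exact hcp _ x hzx hzp₁ (hQ₂ne x hx) ((hzf2 (c x) hκ).trans rfl) 
  have hinj2 : Set.InjOn c (Qf u₂) := by
    intro x hx y hy hcxy
    by_contra hne
    exact hcp x y (hQclique u₂ hu₂I x hx y hy hne) (hQ₂ne x hx) (hQ₂ne y hy) hcxy
  have hq₂eq : (Qf u₂).card = ((Qf u₂).image c).card :=
    (Finset.card_image_of_injOn hinj2).symm
  have hsub2 : (Qf u₂).image c ⊆ K₁.image c := by
    intro κ hκ
    obtain ⟨x, hx, rfl⟩ := Finset.mem_image.mp hκ
    exact hQ₂col x hx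
  have hq₂le : (Qf u₂).card ≤ q₁ - 1 := by
    rw [hq₂eq, ← hK₁card]
    exact Finset.card_le_card hsub2
  have hq₁le : q₁ ≤ (Qf u₂).card := hmin u₂ hu₂I
  have hq₁2 : 2 ≤ q₁ := hQlow u₁ hu₁
  omega
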